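/- (Revolute joint, Lemma 2) For any normalized twist ξ̄ = (ω, v) with ‖ω‖ = 1 and ωᵀv = 0 (zero pitch), there exist θ, d, α, a such that for all q, exp(ξ̂̄ q) = H · R_Z(q) · H⁻¹ with H = R_Z(θ)T_Z(d)R_X(α)T_X(a). -/

import Mathlib

open Matrix Real

noncomputable section

/-- Skew-symmetric matrix of a 3-vector. -/
def skew (w : Fin 3 → ℝ) : Matrix (Fin 3) (Fin 3) ℝ :=
  !![0, -w 2, w 1; w 2, 0, -w 0; -w 1, w 0, 0]

/-- 4×4 twist matrix of twist coordinates (ω, v). -/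
def twistM (w v : Fin 3 → ℝ) : Matrix (Fin 4) (Fin 4) ℝ :=
  !![0, -w 2, w 1, v 0;
     w 2, 0, -w 0, v 1;
     -w 1, w 0, 0, v 2;
     0, 0, 0, 0]

/-- Homogeneous transformation [[R,t],[0,1]]. -/
def homog (R : Matrix (Fin 3) (Fin 3) ℝ) (t : Fin 3 → ℝ) : Matrix (Fin 4) (Fin 4) ℝ :=
  !![R 0 0, R 0 1, R 0 2, t 0;
     R 1 0, R 1 1, R 1 2, t 1;
     R 2 0, R 2 1, R 2 2, t 2;
     0, 0, 0, 1]

def isSO3 (R : Matrix (Fin 3) (Fin 3) ℝ) : Prop := R * Rᵀ = 1 ∧ R.det = 1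

def isSE3 (H : Matrix (Fin 4) (Fin 4) ℝ) : Prop :=
  ∃ R t, isSO3 R ∧ H = homog R t

def isTwist (X : Matrix (Fin 4) (Fin 4) ℝ) : Prop := ∃ w v, X = twistM w v

def RZ (θ : ℝ) : Matrix (Fin 4) (Fin 4) ℝ :=
  homog !![Real.cos θ, -Real.sin θ, 0; Real.sin θ, Real.cos θ, 0; 0, 0, 1] ![0, 0, 0]

def TZ (d : ℝ) : Matrix (Fin 4) (Fin 4) ℝ := homog 1 ![0, 0, d]

def RX (α : ℝ) : Matrix (Fin 4) (Fin 4) ℝ :=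
  homog !![1, 0, 0; 0, Real.cos α, -Real.sin α; 0, Real.sin α, Real.cos α] ![0, 0, 0]

def TX (a : ℝ) : Matrix (Fin 4) (Fin 4) ℝ := homog 1 ![a, 0, 0]

/-- The block-diagonal embedding of `ℂ × ℝ` into 4×4 real matrices. -/
def psiDH : ℂ × ℝ →+* Matrix (Fin 4) (Fin 4) ℝ where
  toFun p := !![p.1.re, -p.1.im, 0, 0; p.1.im, p.1.re, 0, 0; 0, 0, p.2, 0; 0, 0, 0, p.2]
  map_one' := by
    ext i j
    fin_cases i <;> fin_cases j <;> simp [Matrix.one_apply, Matrix.vecHead, Matrix.vecTail]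
  map_mul' p q := by
    ext i j
    fin_cases i <;> fin_cases j <;>
      simp [Matrix.mul_apply, Fin.sum_univ_four, Complex.mul_re, Complex.mul_im,
        Matrix.vecHead, Matrix.vecTail] <;> ring
  map_zero' := by
    ext i j
    fin_cases i <;> fin_cases j <;> simp [Matrix.vecHead, Matrix.vecTail]
  map_add' p q := by
    ext i j
    fin_cases i <;> fin_cases j <;> simp [Matrix.vecHead, Matrix.vecTail] <;> ring

theorem psiDH_continuous : Continuous psiDH := by
  apply continuous_matrix
  intro i j
  fin_cases i <;> fin_cases j <;> simp [psiDH] <;> fun_prop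

theorem exp_X3_DH (q : ℝ) :
    NormedSpace.exp (q • twistM ![0,0,1] ![0,0,0]) = RZ q := by
  letI : SeminormedRing (Matrix (Fin 4) (Fin 4) ℝ) := Matrix.linftyOpSemiNormedRing
  letI : NormedRing (Matrix (Fin 4) (Fin 4) ℝ) := Matrix.linftyOpNormedRing
  letI : NormedAlgebra ℝ (Matrix (Fin 4) (Fin 4) ℝ) := Matrix.linftyOpNormedAlgebra
  have h1 : q • twistM ![0,0,1] ![0,0,0] = psiDH ((q : ℂ) * Complex.I, 0) := by
    ext i j
    fin_cases i <;> fin_cases j <;> simp [psiDH, twistM, Matrix.vecHead, Matrix.vecTail]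
  rw [h1]
  erw [← NormedSpace.map_exp psiDH psiDH_continuous]
  have h2 : NormedSpace.exp (((q : ℂ) * Complex.I, 0) : ℂ × ℝ) =
      ((Complex.exp ((q : ℂ) * Complex.I), 1) : ℂ × ℝ) := by
    refine Prod.ext ?_ ?_
    · rw [Prod.fst_exp]
      simp [Complex.exp_eq_exp_ℂ]
    · rw [Prod.snd_exp]
      simp [NormedSpace.exp_zero]
  rw [h2]
  ext i j
  fin_cases i <;> fin_cases j <;>
    simp [psiDH, RZ, homog, Complex.exp_ofReal_mul_I_re, Complex.exp_ofReal_mul_I_im,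
      Matrix.vecHead, Matrix.vecTail]

/-- The explicit D-H homogeneous matrix. -/
def KDH (θ d α a : ℝ) : Matrix (Fin 4) (Fin 4) ℝ :=
  !![Real.cos θ, -Real.sin θ * Real.cos α, Real.sin θ * Real.sin α, a * Real.cos θ;
     Real.sin θ, Real.cos θ * Real.cos α, -Real.cos θ * Real.sin α, a * Real.sin θ;
     0, Real.sin α, Real.cos α, d;
     0, 0, 0, 1]

theorem DH_prod12 (θ d : ℝ) : RZ θ * TZ d =
    !![Real.cos θ, -Real.sin θ, 0, 0; Real.sin θ, Real.cos θ, 0, 0; 0, 0, 1, d; 0,0,0,1] := by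
  ext i j
  fin_cases i <;> fin_cases j <;>
    simp [RZ, TZ, homog, Matrix.mul_apply, Fin.sum_univ_four, Matrix.vecHead, Matrix.vecTail,
      Matrix.one_apply]

theorem DH_prod123 (θ d α : ℝ) : RZ θ * TZ d * RX α =
    !![Real.cos θ, -Real.sin θ * Real.cos α, Real.sin θ * Real.sin α, 0;
       Real.sin θ, Real.cos θ * Real.cos α, -Real.cos θ * Real.sin α, 0;
       0, Real.sin α, Real.cos α, d; 0,0,0,1] := by
  rw [DH_prod12]
  ext i j
  fin_cases i <;> fin_cases j <;>
    simp [RX, homog, Matrix.mul_apply, Fin.sum_univ_four, Matrix.vecHead, Matrix.vecTail]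

theorem DH_prod (θ d α a : ℝ) : RZ θ * TZ d * RX α * TX a = KDH θ d α a := by
  rw [DH_prod123]
  ext i j
  fin_cases i <;> fin_cases j <;>
    simp [TX, KDH, homog, Matrix.mul_apply, Fin.sum_univ_four, Matrix.vecHead, Matrix.vecTail,
      Matrix.one_apply] <;> ring

theorem KDH_det (θ d α a : ℝ) : (KDH θ d α a).det = 1 := by
  simp [KDH, Matrix.det_succ_row_zero, Fin.sum_univ_succ, Matrix.vecHead, Matrix.vecTail,
    Fin.succAbove, Fin.castSucc, Fin.castAdd, Fin.castLE]
  ring_nf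
  linear_combination (Real.sin α ^ 2 + Real.cos α ^ 2) * Real.sin_sq_add_cos_sq θ +
    Real.sin_sq_add_cos_sq α

theorem KDH_conj (ω v : Fin 3 → ℝ) (θ d α a : ℝ)
    (h1 : Real.sin α * Real.sin θ = ω 0)
    (h2 : Real.sin α * Real.cos θ = -(ω 1))
    (h3 : Real.cos α = ω 2)
    (hC1 : ω 2 * (a * Real.sin θ) = ω 1 * d + v 0)
    (hC2 : ω 0 * d = ω 2 * (a * Real.cos θ) + v 1)
    (hC3 : a * Real.sin α = -(v 2)) :
    KDH θ d α a * twistM ![0,0,1] ![0,0,0] = twistM ω v * KDH θ d α a := by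
  have pθ := Real.sin_sq_add_cos_sq θ
  have pα := Real.sin_sq_add_cos_sq α
  ext i j
  fin_cases i <;> fin_cases j <;>
    simp [KDH, twistM, Matrix.mul_apply, Fin.sum_univ_four, Matrix.vecHead, Matrix.vecTail]
  · linear_combination Real.sin θ * h3
  · linear_combination (-Real.cos θ * Real.cos α) * h3 - Real.sin α * h2 + Real.cos θ * pα
  · linear_combination (Real.cos θ * Real.sin α) * h3 + (-Real.cos α) * h2
  · linear_combination hC1
  · linear_combination Real.cos θ * h3
  · linear_combination (-Real.sin θ * Real.cos α) * h3 - Real.sin α * h1 + Real.sin θ * pα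
  · linear_combination (Real.sin θ * Real.sin α) * h3 + (-Real.cos α) * h1
  · linear_combination hC2
  · linear_combination Real.cos θ * h2 + Real.sin θ * h1 + (-Real.sin α) * pθ
  · linear_combination (-Real.sin θ * Real.cos α) * h2 + (Real.cos θ * Real.cos α) * h1
  · linear_combination (Real.sin θ * Real.sin α) * h2 + (-Real.cos θ * Real.sin α) * h1
  · linear_combination (a * Real.cos θ) * h2 + (a * Real.sin θ) * h1 - hC3
      + (-(a * Real.sin α)) * pθ

theorem DH_key (ω v : Fin 3 → ℝ) (θ d α a : ℝ)
    (h1 : Real.sin α * Real.sin θ = ω 0)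
    (h2 : Real.sin α * Real.cos θ = -(ω 1))
    (h3 : Real.cos α = ω 2)
    (hC1 : ω 2 * (a * Real.sin θ) = ω 1 * d + v 0)
    (hC2 : ω 0 * d = ω 2 * (a * Real.cos θ) + v 1)
    (hC3 : a * Real.sin α = -(v 2)) :
    ∀ q : ℝ,
      NormedSpace.exp (q • twistM ω v) =
        (RZ θ * TZ d * RX α * TX a) * RZ q * (RZ θ * TZ d * RX α * TX a)⁻¹ := by
  intro q
  have hdet : (KDH θ d α a).det = 1 := KDH_det θ d α a
  have hdu : IsUnit (KDH θ d α a).det := by rw [hdet]; exact isUnit_one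
  have hunit : IsUnit (KDH θ d α a) := (Matrix.isUnit_iff_isUnit_det _).mpr hdu
  have hconj := KDH_conj ω v θ d α a h1 h2 h3 hC1 hC2 hC3
  have hinv : KDH θ d α a * (KDH θ d α a)⁻¹ = 1 := Matrix.mul_nonsing_inv _ hdu
  have htw : twistM ω v = KDH θ d α a * twistM ![0,0,1] ![0,0,0] * (KDH θ d α a)⁻¹ := by
    rw [hconj, Matrix.mul_assoc, hinv, Matrix.mul_one]
  have hsmul : q • twistM ω v =
      KDH θ d α a * (q • twistM ![0,0,1] ![0,0,0]) * (KDH θ d α a)⁻¹ := by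
    rw [htw, Matrix.mul_smul, Matrix.smul_mul]
  rw [DH_prod, hsmul, Matrix.exp_conj (KDH θ d α a) _ hunit, exp_X3_DH]

/-- Lemma 2: D-H parameterization of a revolute joint twist. -/
theorem revolute_joint_DH (ω v : Fin 3 → ℝ)
    (hω : Real.sqrt (ω 0 ^ 2 + ω 1 ^ 2 + ω 2 ^ 2) = 1)
    (hpitch : ω ⬝ᵥ v = 0) :
    ∃ θ d α a : ℝ,
      ∀ q : ℝ,
        NormedSpace.exp (q • twistM ω v) =
          (RZ θ * TZ d * RX α * TX a) * RZ q * (RZ θ * TZ d * RX α * TX a)⁻¹ := by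
  have hpos : (0:ℝ) ≤ ω 0 ^ 2 + ω 1 ^ 2 + ω 2 ^ 2 := by positivity
  have hnorm : ω 0 ^ 2 + ω 1 ^ 2 + ω 2 ^ 2 = 1 := by
    rw [← Real.sq_sqrt hpos, hω, one_pow]
  have hp : ω 0 * v 0 + ω 1 * v 1 + ω 2 * v 2 = 0 := by
    simpa [dotProduct, Fin.sum_univ_three] using hpitch
  have hw2a : -1 ≤ ω 2 := by nlinarith [sq_nonneg (ω 0), sq_nonneg (ω 1), sq_nonneg (ω 2 + 1)]
  have hw2b : ω 2 ≤ 1 := by nlinarith [sq_nonneg (ω 0), sq_nonneg (ω 1), sq_nonneg (ω 2 - 1)]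
  set α := Real.arccos (ω 2) with hα
  have h3 : Real.cos α = ω 2 := Real.cos_arccos hw2a hw2b
  have hS : Real.sin α = Real.sqrt (ω 0 ^ 2 + ω 1 ^ 2) := by
    rw [hα, Real.sin_arccos]
    congr 1
    linarith
  have hS2 : Real.sin α ^ 2 = ω 0 ^ 2 + ω 1 ^ 2 := by
    rw [hS, Real.sq_sqrt (by positivity)]
  by_cases hdeg : ω 0 ^ 2 + ω 1 ^ 2 = 0
  · -- degenerate case: axis is ±z
    have hw0 : ω 0 = 0 := by nlinarith [sq_nonneg (ω 0), sq_nonneg (ω 1)]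
    have hw1 : ω 1 = 0 := by nlinarith [sq_nonneg (ω 0), sq_nonneg (ω 1)]
    have hw2sq : ω 2 ^ 2 = 1 := by rw [hw0, hw1] at hnorm; linarith
    have hw2ne : ω 2 ≠ 0 := by intro h; rw [h] at hw2sq; norm_num at hw2sq
    have hv2 : v 2 = 0 := by
      rw [hw0, hw1] at hp
      simp at hp
      rcases hp with h | h
      · exact absurd h hw2ne
      · exact h
    have hSdeg : Real.sin α = 0 := by
      rw [hS, hdeg, Real.sqrt_zero]
    set z : ℂ := ⟨-(ω 2 * v 1), ω 2 * v 0⟩ with hz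
    refine ⟨z.arg, 0, α, ‖z‖, DH_key ω v _ _ _ _ ?_ ?_ h3 ?_ ?_ ?_⟩
    · rw [hSdeg, hw0]; ring
    · rw [hSdeg, hw1]; ring
    · have h := Complex.norm_mul_sin_arg z
      rw [hz] at h
      simp only [Complex.norm_def] at h ⊢
      rw [h, hw1]
      linear_combination v 0 * hw2sq
    · have h := Complex.norm_mul_cos_arg z
      rw [hz] at h
      simp only [Complex.norm_def] at h ⊢
      rw [h, hw0]
      linear_combination v 1 * hw2sq
    · rw [hSdeg, hv2]; ring
  · -- generic case
    have hSpos : 0 < Real.sin α := by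
      rw [hS]
      exact Real.sqrt_pos.mpr (lt_of_le_of_ne (by positivity) (Ne.symm hdeg))
    have hSne : Real.sin α ≠ 0 := ne_of_gt hSpos
    set z : ℂ := ⟨-(ω 1), ω 0⟩ with hz
    have habs : ‖z‖ = Real.sin α := by
      rw [hS, Complex.norm_def, Complex.normSq_mk]
      congr 1
      ring
    have h1 : Real.sin α * Real.sin z.arg = ω 0 := by
      have h := Complex.norm_mul_sin_arg z
      rw [habs] at h
      simpa using h
    have h2 : Real.sin α * Real.cos z.arg = -(ω 1) := by
      have h := Complex.norm_mul_cos_arg z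
      rw [habs] at h
      simpa using h
    set a : ℝ := -(v 2) / Real.sin α with ha'
    set d : ℝ := (ω 0 * v 1 - ω 1 * v 0) / Real.sin α ^ 2 with hd'
    have ha : Real.sin α * a = -(v 2) := by
      rw [ha']; field_simp; try ring
    have hd : Real.sin α ^ 2 * d = ω 0 * v 1 - ω 1 * v 0 := by
      rw [hd']; field_simp; try ring
    have hcancel : ∀ x y : ℝ, Real.sin α ^ 2 * x = Real.sin α ^ 2 * y → x = y :=
      fun x y h => mul_left_cancel₀ (pow_ne_zero 2 hSne) h
    refine ⟨z.arg, d, α, a, DH_key ω v _ _ _ _ h1 h2 h3 ?_ ?_ ?_⟩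
    · apply hcancel
      linear_combination (ω 2 * Real.sin α * Real.sin z.arg) * ha - (ω 2 * v 2) * h1
        - ω 1 * hd - v 0 * hS2 - ω 0 * hp
    · apply hcancel
      linear_combination ω 0 * hd - (ω 2 * Real.sin α * Real.cos z.arg) * ha
        + (ω 2 * v 2) * h2 - v 1 * hS2 - ω 1 * hp
    · linear_combination ha
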